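/- Let n ≥ 1, let N = p_1·p_2···p_n be the product of the first n primes, and let K be a natural number. The number of integers x with 1 ≤ x ≤ K·N such that both x − 1 and x + 1 are coprime to N equals K·∏_{i=2}^{n} (p_i − 2); that is, each of the K consecutive cycles of length N contains exactly ∏_{i=2}^{n}(p_i − 2) twin n-prime pairs. -/

import Mathlib

open Finset

lemma pi_isUnit_iff {ι : Type*} {M : ι → Type*} [∀ i, CommMonoid (M i)] (f : Π i, M i) :
    IsUnit f ↔ ∀ i, IsUnit (f i) := by
  simp_rw [isUnit_iff_exists_inv]
  constructor
  · rintro ⟨g, hg⟩ i; exact ⟨g i, congrFun hg i⟩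
  · intro h; choose g hg using h; exact ⟨g, funext hg⟩

lemma card_cond_zmod_prime (p : ℕ) (hp : p.Prime) :
    Nat.card {y : ZMod p // IsUnit (y - 1) ∧ IsUnit (y + 1)}
      = if p = 2 then 1 else p - 2 := by
  classical
  haveI := Fact.mk hp
  haveI : NeZero p := ⟨hp.pos.ne'⟩
  have h : ∀ y : ZMod p, (IsUnit (y - 1) ∧ IsUnit (y + 1)) ↔ ¬(y = 1 ∨ y = -1) := by
    intro y
    simp only [isUnit_iff_ne_zero, ne_eq, sub_eq_zero, add_eq_zero_iff_eq_neg, not_or]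
  rw [Nat.card_eq_fintype_card, Fintype.card_subtype]
  have hset : (Finset.univ.filter (fun y : ZMod p => IsUnit (y - 1) ∧ IsUnit (y + 1)))
      = Finset.univ \ {1, -1} := by
    ext y
    simp only [mem_filter, mem_univ, true_and, mem_sdiff, mem_insert, mem_singleton, h y]
  rw [hset, card_sdiff_of_subset (subset_univ _), card_univ, ZMod.card]
  by_cases h2 : p = 2
  · subst h2
    rw [if_pos rfl]
    have hne : (-1 : ZMod 2) = 1 := rfl
    simp [hne]
  · have hlt : 2 < p := lt_of_le_of_ne hp.two_le (Ne.symm h2)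
    haveI : Fact (2 < p) := ⟨hlt⟩
    rw [if_neg h2, card_insert_of_notMem (by simp [(ZMod.neg_one_ne_one).symm]),
      card_singleton]

lemma card_cond_zmod_prod (n : ℕ) (p : Fin n → ℕ) (hp : ∀ i, (p i).Prime)
    (hco : Pairwise (Function.onFun Nat.Coprime p)) :
    Nat.card {y : ZMod (∏ i, p i) // IsUnit (y - 1) ∧ IsUnit (y + 1)}
      = ∏ i, Nat.card {y : ZMod (p i) // IsUnit (y - 1) ∧ IsUnit (y + 1)} := by
  haveI : NeZero (∏ i, p i) := ⟨(Finset.prod_pos fun i _ => (hp i).pos).ne'⟩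
  haveI : ∀ i, NeZero (p i) := fun i => ⟨(hp i).pos.ne'⟩
  let e := ZMod.prodEquivPi p hco
  have hiso : ∀ x : ZMod (∏ i, p i), IsUnit x ↔ IsUnit (e x) :=
    fun x => ⟨fun h => h.map e, fun h => by simpa using h.map e.symm⟩
  have key : Nat.card {y : ZMod (∏ i, p i) // IsUnit (y - 1) ∧ IsUnit (y + 1)}
      = Nat.card (Π i, {x : ZMod (p i) // IsUnit (x - 1) ∧ IsUnit (x + 1)}) := by
    apply Nat.card_congr
    refine (e.toEquiv.subtypeEquiv ?_).trans (Equiv.subtypePiEquivPi)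
    intro y
    rw [hiso (y - 1), hiso (y + 1), map_sub, map_add, map_one,
      pi_isUnit_iff, pi_isUnit_iff, ← forall_and]
    rfl
  rw [key, Nat.card_pi]

lemma card_cycle_eq (N : ℕ) (hN : 0 < N) :
    ((Finset.Ioc 0 N).filter
        (fun x => Nat.Coprime (x - 1) N ∧ Nat.Coprime (x + 1) N)).card
      = Nat.card {y : ZMod N // IsUnit (y - 1) ∧ IsUnit (y + 1)} := by
  classical
  haveI : NeZero N := ⟨hN.ne'⟩
  rw [Nat.card_eq_fintype_card, Fintype.card_subtype]
  apply Finset.card_bij (i := fun (x : ℕ) _ => (x : ZMod N))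
  · intro x hx
    simp only [mem_filter, mem_Ioc] at hx
    obtain ⟨⟨hx0, hxN⟩, h1, h2⟩ := hx
    simp only [mem_filter, mem_univ, true_and]
    constructor
    · have := (ZMod.isUnit_iff_coprime (x - 1) N).mpr h1
      rwa [Nat.cast_sub hx0, Nat.cast_one] at this
    · have := (ZMod.isUnit_iff_coprime (x + 1) N).mpr h2
      rwa [Nat.cast_add, Nat.cast_one] at this
  · intro x hx y hy hxy
    simp only [mem_filter, mem_Ioc] at hx hy
    rw [ZMod.natCast_eq_natCast_iff] at hxy
    have hx' : x % N = x ∨ (x = N ∧ x % N = 0) := by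
      rcases lt_or_eq_of_le hx.1.2 with h | h
      · exact Or.inl (Nat.mod_eq_of_lt h)
      · exact Or.inr ⟨h, by simp [h]⟩
    have hy' : y % N = y ∨ (y = N ∧ y % N = 0) := by
      rcases lt_or_eq_of_le hy.1.2 with h | h
      · exact Or.inl (Nat.mod_eq_of_lt h)
      · exact Or.inr ⟨h, by simp [h]⟩
    have hxy' : x % N = y % N := hxy
    omega
  · intro y hy
    simp only [mem_filter, mem_univ, true_and] at hy
    have hvlt := ZMod.val_lt y
    have hcast : ((if y.val = 0 then N else y.val : ℕ) : ZMod N) = y := by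
      split_ifs with h
      · rw [ZMod.natCast_self]
        exact ((ZMod.val_eq_zero y).mp h).symm
      · rw [ZMod.natCast_val, ZMod.cast_id]
    refine ⟨if y.val = 0 then N else y.val, ?_, hcast⟩
    simp only [mem_filter, mem_Ioc]
    have hge1 : 1 ≤ (if y.val = 0 then N else y.val) := by split_ifs <;> omega
    refine ⟨⟨by omega, by split_ifs <;> omega⟩, ?_, ?_⟩
    · rw [← ZMod.isUnit_iff_coprime, Nat.cast_sub hge1, Nat.cast_one, hcast]
      exact hy.1
    · rw [← ZMod.isUnit_iff_coprime, Nat.cast_add, Nat.cast_one, hcast]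
      exact hy.2

lemma card_cycles (N : ℕ) (hN : 0 < N) (K : ℕ) (P : ℕ → Prop) [DecidablePred P]
    (hP : ∀ x, 0 < x → (P (x + N) ↔ P x)) :
    ((Finset.Ioc 0 (K * N)).filter P).card = K * ((Finset.Ioc 0 N).filter P).card := by
  have hPk : ∀ k x, 0 < x → (P (x + k * N) ↔ P x) := by
    intro k
    induction k with
    | zero => simp
    | succ k ih =>
      intro x hx
      have : x + (k + 1) * N = (x + k * N) + N := by ring
      rw [this, hP _ (by omega), ih x hx]
  induction K with
  | zero => simp
  | succ K ih =>
    have hmul : (K + 1) * N = K * N + N := by ring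
    rw [hmul]
    have hsplit : Finset.Ioc 0 (K * N + N)
        = Finset.Ioc 0 (K * N) ∪ Finset.Ioc (K * N) (K * N + N) :=
      (Finset.Ioc_union_Ioc_eq_Ioc (Nat.zero_le _) (by omega)).symm
    have hdisj : Disjoint ((Finset.Ioc 0 (K * N)).filter P)
        ((Finset.Ioc (K * N) (K * N + N)).filter P) := by
      apply Finset.disjoint_filter_filter
      simp only [Finset.disjoint_left, mem_Ioc]
      intro a h1 h2
      omega
    rw [hsplit, filter_union, card_union_of_disjoint hdisj, ih]
    have hshift : ((Finset.Ioc (K * N) (K * N + N)).filter P).card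
        = ((Finset.Ioc 0 N).filter P).card := by
      apply Finset.card_nbij' (fun y => y - K * N) (fun x => x + K * N)
      · intro y hy
        simp only [mem_coe, mem_filter, mem_Ioc] at hy ⊢
        refine ⟨by omega, ?_⟩
        have heq : y - K * N + K * N = y := by omega
        rw [← hPk K (y - K * N) (by omega), heq]
        exact hy.2
      · intro x hx
        simp only [mem_coe, mem_filter, mem_Ioc] at hx ⊢
        refine ⟨⟨by omega, by omega⟩, ?_⟩
        rw [hPk K x hx.1.1]
        exact hx.2
      · intro y hy
        simp only [mem_coe, mem_filter, mem_Ioc] at hy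
        show y - K * N + K * N = y
        omega
      · intro x hx
        show x + K * N - K * N = x
        omega
    rw [hshift]
    ring

/-- Paper's Corollary 2a: with `N` the product of the first `n` primes and `K`
a natural number, the number of integers `1 ≤ x ≤ K·N` with both `x - 1` and
`x + 1` coprime to `N` equals `K·∏_{i=2}^{n} (p_i - 2)`: each of the `K`
consecutive cycles of length `N` contains exactly `∏_{i=2}^{n} (p_i - 2)` twin
`n`-prime pairs. -/
theorem count_twin_nPrimes_cycles (n : ℕ) (hn : 1 ≤ n)
    (N : ℕ) (hN : N = ∏ i ∈ Finset.range n, Nat.nth Nat.Prime i) (K : ℕ) :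
    ((Finset.Icc 1 (K * N)).filter
        (fun x => Nat.Coprime (x - 1) N ∧ Nat.Coprime (x + 1) N)).card =
      K * ∏ i ∈ Finset.Ico 1 n, (Nat.nth Nat.Prime i - 2) := by
  have hprime : ∀ i, (Nat.nth Nat.Prime i).Prime := fun i =>
    Nat.nth_mem_of_infinite Nat.infinite_setOf_prime i
  have hNpos : 0 < N := by
    rw [hN]
    exact Finset.prod_pos fun i _ => (hprime i).pos
  have hicc : Finset.Icc 1 (K * N) = Finset.Ioc 0 (K * N) := by
    ext a
    simp only [mem_Icc, mem_Ioc]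
    omega
  rw [hicc, card_cycles N hNpos K _ (by
      intro x hx
      have h1 : x + N - 1 = (x - 1) + N := by omega
      have h2 : x + N + 1 = (x + 1) + N := by omega
      rw [h1, h2, Nat.coprime_add_self_left, Nat.coprime_add_self_left]),
    card_cycle_eq N hNpos]
  congr 1
  have hNfin : N = ∏ i : Fin n, Nat.nth Nat.Prime i := by
    rw [hN, ← Fin.prod_univ_eq_prod_range]
  have hco : Pairwise (Function.onFun Nat.Coprime fun i : Fin n => Nat.nth Nat.Prime i) := by
    intro i j hij
    exact (Nat.coprime_primes (hprime i) (hprime j)).mpr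
      fun h => hij (Fin.ext (Nat.nth_injective Nat.infinite_setOf_prime h))
  have hcrt := card_cond_zmod_prod n (fun i : Fin n => Nat.nth Nat.Prime i)
    (fun i => hprime i) hco
  rw [← hNfin] at hcrt
  rw [hcrt]
  have hprod : ∀ i : Fin n,
      Nat.card {y : ZMod (Nat.nth Nat.Prime (i : ℕ)) // IsUnit (y - 1) ∧ IsUnit (y + 1)}
      = if Nat.nth Nat.Prime (i : ℕ) = 2 then 1 else Nat.nth Nat.Prime (i : ℕ) - 2 :=
    fun i => card_cond_zmod_prime _ (hprime i)
  rw [Finset.prod_congr rfl fun i _ => hprod i,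
    Fin.prod_univ_eq_prod_range (fun j => if Nat.nth Nat.Prime j = 2 then 1
      else Nat.nth Nat.Prime j - 2) n,
    Finset.prod_range_eq_mul_Ico _ hn, Nat.nth_prime_zero_eq_two, if_pos rfl, one_mul]
  apply Finset.prod_congr rfl
  intro i hi
  rw [if_neg]
  have hlt : Nat.nth Nat.Prime 0 < Nat.nth Nat.Prime i := by
    rw [Nat.nth_lt_nth Nat.infinite_setOf_prime]
    exact (Finset.mem_Ico.mp hi).1
  rw [Nat.nth_prime_zero_eq_two] at hlt
  omega
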